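/- For α ∈ (0,1), p > 1, m ∈ ℝ, v > 0: sup{VaR_α(Y) : E[Y]=m, E[|Y−m|^p] ≤ v^p} = max{ES_α(Y) : E[Y]=m, E[|Y−m|^p] ≤ v^p} = m + v·α·(α^p(1−α) + (1−α)^p α)^{−1/p}, and the maximum of ES_α is attained by a two-point distribution taking value m + α·k_p with probability 1−α and m − (1−α)·k_p with probability α, where k_p = v(α^p(1−α)+(1−α)^p α)^{−1/p}. For p = 2 this equals m + v·sqrt(α/(1−α)) (the Cantelli-type bound), and the VaR supremum is not attained. -/

import Mathlib

open MeasureTheory Set Classical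
open scoped ENNReal
set_option linter.unusedSectionVars false
set_option linter.unusedVariables false

/-- Left-quantile function of a distribution on ℝ. -/
noncomputable def leftQuantile (μ : Measure ℝ) (p : ℝ) : ℝ :=
  sInf {x : ℝ | p ≤ (μ (Iic x)).toReal}

/-- The uniform distribution on [0,1]. -/
noncomputable def unif01 : Measure ℝ := volume.restrict (Icc (0:ℝ) 1)

/-- The C-concentration of a distribution: the law of
`F⁻¹(U)·1_{U∉C} + E[F⁻¹(U) | U∈C]·1_{U∈C}` with `U` uniform on [0,1]. -/

noncomputable def concentration (μ : Measure ℝ) (C : Set ℝ) : Measure ℝ :=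
  Measure.map
    (fun u => if u ∈ C then (∫ t in C, leftQuantile μ t) / (volume C).toReal
      else leftQuantile μ u) unif01

/-- The moment uncertainty set `M^p(m,v)`: distributions with mean `m` and `p`-th central
moment at most `v^p`. -/
def momentSet (p m v : ℝ) : Set (Measure ℝ) :=
  {μ | IsProbabilityMeasure μ ∧ Integrable id μ ∧ (∫ x, x ∂μ) = m ∧
    Integrable (fun x => |x - m| ^ p) μ ∧ (∫ x, |x - m| ^ p ∂μ) ≤ v ^ p}

/-- Value-at-Risk: the left `α`-quantile. -/
noncomputable def VaR (μ : Measure ℝ) (α : ℝ) : ℝ := leftQuantile μ α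

/-- Expected Shortfall: `ES_α = (1/(1-α)) ∫_α^1 VaR_t dt`. -/
noncomputable def ES (μ : Measure ℝ) (α : ℝ) : ℝ :=
  (1 / (1 - α)) * ∫ t in Ioo α 1, leftQuantile μ t

section CDF

open Filter Topology

variable (μ : Measure ℝ) [IsProbabilityMeasure μ]

/-- real-valued CDF -/
noncomputable def cdfR (x : ℝ) : ℝ := (μ (Iic x)).toReal

lemma cdfR_mono : Monotone (cdfR μ) := fun _ _ hxy =>
  ENNReal.toReal_mono (measure_ne_top μ _) (measure_mono (Iic_subset_Iic.2 hxy))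

lemma cdfR_nonneg (x : ℝ) : 0 ≤ cdfR μ x := ENNReal.toReal_nonneg

lemma cdfR_le_one (x : ℝ) : cdfR μ x ≤ 1 := by
  have : μ (Iic x) ≤ 1 := prob_le_one
  simpa [cdfR] using ENNReal.toReal_mono (by simp) this

lemma exists_cdfR_lt {u : ℝ} (hu : 0 < u) : ∃ y : ℝ, cdfR μ y < u := by
  have h : Tendsto (fun n : ℕ => μ (Iic (-(n:ℝ)))) atTop (𝓝 (μ (⋂ n : ℕ, Iic (-(n:ℝ))))) := by
    refine tendsto_measure_iInter_atTop (fun i => nullMeasurableSet_Iic) ?_ ⟨0, measure_ne_top μ _⟩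
    intro i j hij
    exact Iic_subset_Iic.2 (by exact_mod_cast neg_le_neg (by exact_mod_cast hij))
  have hempty : (⋂ n : ℕ, Iic (-(n:ℝ))) = ∅ := by
    ext y
    simp only [mem_iInter, mem_Iic, mem_empty_iff_false, iff_false, not_forall, not_le]
    obtain ⟨n, hn⟩ := exists_nat_gt (-y)
    exact ⟨n, by linarith⟩
  rw [hempty, measure_empty] at h
  have h2 : Tendsto (fun n : ℕ => cdfR μ (-(n:ℝ))) atTop (𝓝 0) := by
    have := (ENNReal.tendsto_toReal (by simp : (0:ℝ≥0∞) ≠ ⊤)).comp h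
    simpa [cdfR, Function.comp_def] using this
  obtain ⟨n, hn⟩ := (h2.eventually (gt_mem_nhds hu)).exists
  exact ⟨-(n:ℝ), hn⟩

lemma exists_le_cdfR {u : ℝ} (hu : u < 1) : ∃ y : ℝ, u ≤ cdfR μ y := by
  have h : Tendsto (fun x : ℝ => μ (Iic x)) atTop (𝓝 (μ univ)) := tendsto_measure_Iic_atTop μ
  rw [measure_univ] at h
  have h2 : Tendsto (cdfR μ) atTop (𝓝 1) := by
    have := (ENNReal.tendsto_toReal (by simp : (1:ℝ≥0∞) ≠ ⊤)).comp h
    exact this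
  obtain ⟨y, hy⟩ := (h2.eventually (lt_mem_nhds hu)).exists
  exact ⟨y, hy.le⟩

lemma le_cdfR_of_forall_lt {u x : ℝ} (h : ∀ y, x < y → u ≤ cdfR μ y) : u ≤ cdfR μ x := by
  have hseq : Tendsto (fun n : ℕ => μ (Iic (x + 1/(n+1)))) atTop
      (𝓝 (μ (⋂ n : ℕ, Iic (x + 1/(n+1))))) := by
    refine tendsto_measure_iInter_atTop (fun i => nullMeasurableSet_Iic) ?_ ⟨0, measure_ne_top μ _⟩
    intro i j hij
    have hle : (1:ℝ)/(j+1) ≤ 1/(i+1) :=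
      one_div_le_one_div_of_le (by positivity)
        (by exact_mod_cast Nat.add_le_add_right hij 1)
    exact Iic_subset_Iic.2 (by linarith)
  have hIic : (⋂ n : ℕ, Iic (x + 1/(n+1))) = Iic x := by
    ext z
    simp only [mem_iInter, mem_Iic]
    constructor
    · intro hz
      by_contra hzx
      push_neg at hzx
      obtain ⟨n, hn⟩ := exists_nat_one_div_lt (by linarith : 0 < z - x)
      have h3 : (1:ℝ)/(n+1) < z - x := hn
      linarith [hz n]
    · intro hz n
      have : (0:ℝ) < 1/(n+1) := by positivity
      linarith
  rw [hIic] at hseq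
  have h2 : Tendsto (fun n : ℕ => cdfR μ (x + 1/(n+1))) atTop (𝓝 (cdfR μ x)) := by
    have := (ENNReal.tendsto_toReal (measure_ne_top μ _)).comp hseq
    simpa [cdfR, Function.comp_def] using this
  refine ge_of_tendsto h2 (Eventually.of_forall fun n => h _ ?_)
  have : (0:ℝ) < 1/(n+1) := by positivity
  linarith

lemma bddBelow_quantSet {u : ℝ} (hu : 0 < u) : BddBelow {x : ℝ | u ≤ cdfR μ x} := by
  obtain ⟨y, hy⟩ := exists_cdfR_lt μ hu
  refine ⟨y, fun z hz => ?_⟩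
  by_contra hzy
  push_neg at hzy
  exact absurd (le_trans hz (cdfR_mono μ hzy.le)) (not_le.2 hy)

lemma quantSet_nonempty {u : ℝ} (hu : u < 1) : {x : ℝ | u ≤ cdfR μ x}.Nonempty :=
  exists_le_cdfR μ hu

lemma leftQuantile_eq_csInf (u : ℝ) : leftQuantile μ u = sInf {x : ℝ | u ≤ cdfR μ x} := rfl

lemma leftQuantile_le_iff {u x : ℝ} (hu0 : 0 < u) (hu1 : u < 1) :
    leftQuantile μ u ≤ x ↔ u ≤ cdfR μ x := by
  constructor
  · intro h
    have hne := quantSet_nonempty μ hu1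
    have hbdd := bddBelow_quantSet μ hu0
    have key : u ≤ cdfR μ (sInf {x : ℝ | u ≤ cdfR μ x}) := by
      refine le_cdfR_of_forall_lt μ (fun y hy => ?_)
      obtain ⟨z, hz, hzy⟩ := (csInf_lt_iff hbdd hne).1 hy
      exact le_trans hz (cdfR_mono μ hzy.le)
    exact le_trans key (cdfR_mono μ h)
  · intro h
    exact csInf_le (bddBelow_quantSet μ hu0) h

lemma monotoneOn_leftQuantile : MonotoneOn (leftQuantile μ) (Ioo 0 1) := by
  intro u hu u' hu' huu'
  refine csInf_le_csInf (bddBelow_quantSet μ hu.1) (quantSet_nonempty μ hu'.2) ?_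
  intro x hx
  exact le_trans huu' hx

lemma aemeasurable_leftQuantile :
    AEMeasurable (leftQuantile μ) (volume.restrict (Ioo (0:ℝ) 1)) :=
  aemeasurable_restrict_of_monotoneOn measurableSet_Ioo (monotoneOn_leftQuantile μ)

lemma map_leftQuantile :
    Measure.map (leftQuantile μ) (volume.restrict (Ioo (0:ℝ) 1)) = μ := by
  refine Measure.ext_of_Iic _ _ (fun x => ?_)
  rw [Measure.map_apply_of_aemeasurable (aemeasurable_leftQuantile μ) measurableSet_Iic,
    Measure.restrict_apply' measurableSet_Ioo]
  have hset : (leftQuantile μ ⁻¹' Iic x) ∩ Ioo 0 1 = Ioc 0 (cdfR μ x) ∩ Ioo 0 1 := by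
    ext u
    simp only [mem_inter_iff, mem_preimage, mem_Iic, mem_Ioo, mem_Ioc]
    constructor
    · rintro ⟨h1, h2, h3⟩
      exact ⟨⟨h2, (leftQuantile_le_iff μ h2 h3).1 h1⟩, h2, h3⟩
    · rintro ⟨⟨h2, h1⟩, _, h3⟩
      exact ⟨(leftQuantile_le_iff μ h2 h3).2 h1, h2, h3⟩
  rw [hset]
  rcases lt_or_ge (cdfR μ x) 1 with h1 | h1
  · have : Ioc (0:ℝ) (cdfR μ x) ∩ Ioo 0 1 = Ioc 0 (cdfR μ x) := by
      refine inter_eq_left.2 (fun u hu => ⟨hu.1, lt_of_le_of_lt hu.2 h1⟩)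
    rw [this, Real.volume_Ioc, sub_zero, cdfR, ENNReal.ofReal_toReal (measure_ne_top μ _)]
  · have hF1 : cdfR μ x = 1 := le_antisymm (cdfR_le_one μ x) h1
    have : Ioc (0:ℝ) (cdfR μ x) ∩ Ioo 0 1 = Ioo 0 1 := by
      refine inter_eq_right.2 (fun u hu => ⟨hu.1, by rw [hF1]; exact hu.2.le⟩)
    rw [this, Real.volume_Ioo, sub_zero, ENNReal.ofReal_one]
    have : μ (Iic x) = ENNReal.ofReal (cdfR μ x) := by
      rw [cdfR, ENNReal.ofReal_toReal (measure_ne_top μ _)]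
    rw [this, hF1, ENNReal.ofReal_one]

end CDF

section Transfer

open Filter Topology

variable (μ : Measure ℝ) [IsProbabilityMeasure μ]

lemma integrable_comp_leftQuantile {g : ℝ → ℝ} (hg : Continuous g)
    (hgi : Integrable g μ) :
    Integrable (fun t => g (leftQuantile μ t)) (volume.restrict (Ioo (0:ℝ) 1)) := by
  have h := (integrable_map_measure (μ := volume.restrict (Ioo (0:ℝ) 1))
      (f := leftQuantile μ) (g := g)
      (by rw [map_leftQuantile μ]; exact hg.aestronglyMeasurable)
      (aemeasurable_leftQuantile μ)).1
  rw [map_leftQuantile μ] at h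
  exact h hgi

lemma integral_comp_leftQuantile {g : ℝ → ℝ} (hg : Continuous g) :
    ∫ t in Ioo (0:ℝ) 1, g (leftQuantile μ t) = ∫ x, g x ∂μ := by
  conv_rhs => rw [← map_leftQuantile μ]
  rw [integral_map (aemeasurable_leftQuantile μ)
    (by rw [map_leftQuantile μ]; exact hg.aestronglyMeasurable)]

lemma integrable_leftQuantile (hint : Integrable id μ) :
    Integrable (leftQuantile μ) (volume.restrict (Ioo (0:ℝ) 1)) := by
  have h := integrable_comp_leftQuantile μ (g := fun x => x) continuous_id' (by exact hint)
  simpa using h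

lemma integrable_leftQuantile_Ioo {α : ℝ} (hα : α ∈ Ioo (0:ℝ) 1) (hint : Integrable id μ) :
    Integrable (leftQuantile μ) (volume.restrict (Ioo α 1)) := by
  have h := (integrable_leftQuantile μ hint).restrict (s := Ioo α 1)
  rwa [Measure.restrict_restrict measurableSet_Ioo,
    inter_eq_left.2 (Ioo_subset_Ioo hα.1.le le_rfl)] at h

lemma VaR_le_ES {α : ℝ} (hα : α ∈ Ioo (0:ℝ) 1) (hint : Integrable id μ) :
    VaR μ α ≤ ES μ α := by
  have h1α : (0:ℝ) < 1 - α := by linarith [hα.2]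
  have hmono : ∀ t ∈ Ioo α 1, leftQuantile μ α ≤ leftQuantile μ t := by
    intro t ht
    exact monotoneOn_leftQuantile μ hα ⟨lt_trans hα.1 ht.1, ht.2⟩ ht.1.le
  have hconst : ∫ t in Ioo α 1, leftQuantile μ α = (1 - α) * leftQuantile μ α := by
    rw [setIntegral_const, measureReal_def, Real.volume_Ioo, ENNReal.toReal_ofReal h1α.le, smul_eq_mul]
  have hle : ∫ t in Ioo α 1, leftQuantile μ α ≤ ∫ t in Ioo α 1, leftQuantile μ t := by
    refine setIntegral_mono_on (integrableOn_const (by simp [Real.volume_Ioo]))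
      (integrable_leftQuantile_Ioo μ hα hint) measurableSet_Ioo hmono
  rw [hconst] at hle
  rw [VaR, ES, one_div, inv_mul_eq_div, le_div_iff₀ h1α]
  linarith [hle]

end Transfer

section Bound

open Filter Topology Real


lemma rpow_eq_mul_rpow_sub_one {d : ℝ} (hd : 0 < d) (p : ℝ) : d ^ p = d * d ^ (p - 1) := by
  have h := Real.rpow_add hd 1 (p - 1)
  rw [Real.rpow_one, show (1:ℝ) + (p - 1) = p from by ring] at h
  exact h

lemma young_aux {p : ℝ} (hp : 1 < p) {d : ℝ} (hd : 0 ≤ d) (w : ℝ) :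
    p * d ^ (p-1) * w ≤ |w| ^ p + (p-1) * d ^ p := by
  have hp0 : (0:ℝ) < p := by linarith
  have hp1 : (0:ℝ) < p - 1 := by linarith
  have hpq := Real.HolderConjugate.conjExponent hp
  have hY := Real.young_inequality_of_nonneg (abs_nonneg w) (Real.rpow_nonneg hd (p-1)) hpq
  have hd2 : (d ^ (p-1)) ^ Real.conjExponent p = d ^ p := by
    rw [← Real.rpow_mul hd]
    congr 1
    rw [Real.conjExponent]
    field_simp
  rw [hd2] at hY
  have hq : Real.conjExponent p = p / (p-1) := rfl
  rw [hq] at hY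
  have h3 : d ^ p / (p / (p - 1)) = d ^ p * (p - 1) / p := by
    field_simp
  rw [h3] at hY
  have h4 : p * d ^ (p-1) * w ≤ p * d ^ (p-1) * |w| :=
    mul_le_mul_of_nonneg_left (le_abs_self w) (mul_nonneg hp0.le (Real.rpow_nonneg hd _))
  have h5 := mul_le_mul_of_nonneg_left hY hp0.le
  have h6 : p * (|w| * d ^ (p-1)) = p * d ^ (p-1) * |w| := by ring
  have h7 : p * (|w| ^ p / p + d ^ p * (p - 1) / p) = |w| ^ p + (p-1) * d ^ p := by
    field_simp
  rw [h6, h7] at h5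
  linarith

set_option maxHeartbeats 1000000 in
lemma ES_le_K (α p m v : ℝ) (hα : α ∈ Ioo (0:ℝ) 1) (hp : 1 < p) (hv : 0 < v)
    (μ : Measure ℝ) (hμ : μ ∈ momentSet p m v) :
    ES μ α ≤ m + v * α * (α ^ p * (1 - α) + (1 - α) ^ p * α) ^ (-(1 / p)) := by
  obtain ⟨hprob, hint_id, hmean, hint_mom, hmom⟩ := hμ
  obtain ⟨hα0, hα1⟩ := hα
  have h1α : (0:ℝ) < 1 - α := by linarith
  have hp0 : (0:ℝ) < p := by linarith
  set base := α ^ p * (1 - α) + (1 - α) ^ p * α with hbase_def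
  have hbase : 0 < base := by positivity
  set k := v * base ^ (-(1/p)) with hk_def
  have hk : 0 < k := mul_pos hv (Real.rpow_pos_of_pos hbase _)
  set d₁ := (1 - α) * k with hd₁def
  set d₂ := α * k with hd₂def
  have hd₁ : 0 < d₁ := mul_pos h1α hk
  have hd₂ : 0 < d₂ := mul_pos hα0 hk
  set X := d₁ ^ (p-1) with hXdef
  set Y := d₂ ^ (p-1) with hYdef
  have hX : 0 < X := Real.rpow_pos_of_pos hd₁ _
  have hY : 0 < Y := Real.rpow_pos_of_pos hd₂ _
  set D := X + Y with hDdef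
  have hD : 0 < D := by positivity
  set θ := (p * D)⁻¹ with hθdef
  have hθ : 0 < θ := by positivity
  set lam := X / D with hlamdef
  set c := (p - 1) * θ * d₁ ^ p with hcdef
  set s := (p - 1) * θ * (d₂ ^ p - d₁ ^ p) with hsdef
  set T := m + s with hTdef
  have hd1p : d₁ ^ p = d₁ * X := by
    rw [hXdef]; exact rpow_eq_mul_rpow_sub_one hd₁ p
  have hd2p : d₂ ^ p = d₂ * Y := by
    rw [hYdef]; exact rpow_eq_mul_rpow_sub_one hd₂ p
  have hvp : α * d₁ ^ p + (1 - α) * d₂ ^ p = v ^ p := by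
    have hkp : k ^ p = v ^ p * base⁻¹ := by
      rw [hk_def, Real.mul_rpow hv.le (Real.rpow_nonneg hbase.le _), ← Real.rpow_mul hbase.le]
      congr 1
      rw [show -(1/p) * p = -1 by field_simp, Real.rpow_neg_one]
    have e1 : α * d₁ ^ p + (1 - α) * d₂ ^ p = k ^ p * base := by
      rw [hd₁def, hd₂def, Real.mul_rpow h1α.le hk.le, Real.mul_rpow hα0.le hk.le, hbase_def]
      ring
    rw [e1, hkp]
    field_simp
  have hbal : α * d₁ = (1 - α) * d₂ := by rw [hd₁def, hd₂def]; ring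
  have hkey : s * (1 - α) + c + θ * v ^ p = (1 - α) * d₂ := by
    have e1 : s * (1-α) + c + θ * v ^ p
        = θ * (p * ((1-α) * (d₂ * Y) + α * (d₁ * X))) := by
      rw [hsdef, hcdef, ← hvp, hd1p, hd2p]; ring
    have e2 : α * (d₁ * X) = (1 - α) * (d₂ * X) := by
      rw [← mul_assoc, hbal]; ring
    rw [e1, e2]
    rw [hθdef, hDdef]
    field_simp
    ring
  have hψ : ∀ x : ℝ, max (x - T) 0 ≤ θ * |x - m| ^ p + lam * (x - m) + c := by
    intro x
    set w := x - m with hw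
    have hyoung₂ := young_aux hp hd₂.le w
    have hyoung₁ := young_aux hp hd₁.le (-w)
    rw [abs_neg] at hyoung₁
    have hθle₂ := mul_le_mul_of_nonneg_left hyoung₂ hθ.le
    have hθle₁ := mul_le_mul_of_nonneg_left hyoung₁ hθ.le
    have hlam_eq : lam = θ * (p * X) := by
      rw [hlamdef, hθdef]; field_simp
    have hlam_eq' : 1 - lam = θ * (p * Y) := by
      rw [hlamdef, hθdef, hDdef]; field_simp; ring
    apply max_le
    · have hxT : x - T = w - s := by rw [hTdef, hw]; ring
      rw [hxT]
      have g1 : θ * (p * d₂ ^ (p-1) * w) = (1 - lam) * w := by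
        rw [hlam_eq']; rw [hYdef]; ring
      have g2 : θ * (|w| ^ p + (p-1) * d₂ ^ p) = θ * |w| ^ p + (c + s) := by
        rw [hcdef, hsdef]; ring
      rw [g1, g2] at hθle₂
      linarith
    · have g3 : θ * (p * d₁ ^ (p-1) * (-w)) = -(lam * w) := by
        rw [hlam_eq]; rw [hXdef]; ring
      have g4 : θ * (|w| ^ p + (p-1) * d₁ ^ p) = θ * |w| ^ p + c := by
        rw [hcdef]; ring
      rw [g3, g4] at hθle₁
      linarith
  -- integral chain
  set q := leftQuantile μ with hqdef
  have hφcont : Continuous (fun x : ℝ => max (x - T) 0) :=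
    (continuous_id.sub continuous_const).max continuous_const
  have hid' : Integrable (fun x : ℝ => x) μ := by exact hint_id
  have hφint : Integrable (fun x : ℝ => max (x - T) 0) μ :=
    (hid'.sub (integrable_const T)).pos_part
  have hq_Ioo : Integrable q (volume.restrict (Ioo α 1)) :=
    integrable_leftQuantile_Ioo μ ⟨hα0, hα1⟩ hint_id
  have hφq : Integrable (fun t => max (q t - T) 0) (volume.restrict (Ioo (0:ℝ) 1)) :=
    integrable_comp_leftQuantile μ hφcont hφint
  have hφq_Ioo : Integrable (fun t => max (q t - T) 0) (volume.restrict (Ioo α 1)) := by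
    have h := hφq.restrict (s := Ioo α 1)
    rwa [Measure.restrict_restrict measurableSet_Ioo,
      inter_eq_left.2 (Ioo_subset_Ioo hα0.le le_rfl)] at h
  have hvolIoo : (volume (Ioo α 1)).toReal = 1 - α := by
    rw [Real.volume_Ioo, ENNReal.toReal_ofReal h1α.le]
  have step1 : ∫ t in Ioo α 1, q t ≤ (1 - α) * T + ∫ t in Ioo α 1, max (q t - T) 0 := by
    have hpt : ∀ t ∈ Ioo α 1, q t ≤ T + max (q t - T) 0 := fun t _ => by
      have := le_max_left (q t - T) (0:ℝ); linarith
    have hRint : Integrable (fun t => T + max (q t - T) 0) (volume.restrict (Ioo α 1)) :=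
      (integrable_const T).add hφq_Ioo
    have h := setIntegral_mono_on hq_Ioo hRint measurableSet_Ioo hpt
    rw [integral_add (integrable_const T) hφq_Ioo, integral_const, measureReal_def,
      Measure.restrict_apply_univ, hvolIoo, smul_eq_mul] at h
    exact h
  have step2 : ∫ t in Ioo α 1, max (q t - T) 0 ≤ ∫ t in Ioo (0:ℝ) 1, max (q t - T) 0 := by
    refine setIntegral_mono_set hφq (Eventually.of_forall fun t => le_max_right _ _) ?_
    exact HasSubset.Subset.eventuallyLE (Ioo_subset_Ioo hα0.le le_rfl)
  have step3 : ∫ t in Ioo (0:ℝ) 1, max (q t - T) 0 = ∫ x, max (x - T) 0 ∂μ :=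
    integral_comp_leftQuantile μ hφcont
  have step4 : ∫ x, max (x - T) 0 ∂μ ≤ θ * v ^ p + c := by
    have hsub : Integrable (fun x : ℝ => x - m) μ := hid'.sub (integrable_const m)
    have hrhs1 : Integrable (fun x => θ * |x - m| ^ p) μ := hint_mom.const_mul θ
    have hrhs2 : Integrable (fun x => lam * (x - m)) μ := hsub.const_mul lam
    have hrhs12 : Integrable (fun x => θ * |x - m| ^ p + lam * (x - m)) μ := hrhs1.add hrhs2
    have hrhs : Integrable (fun x => θ * |x - m| ^ p + lam * (x - m) + c) μ :=
      hrhs12.add (integrable_const c)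
    have h4 := integral_mono hφint hrhs hψ
    rw [integral_add hrhs12 (integrable_const c),
      integral_add hrhs1 hrhs2,
      integral_const_mul, integral_const_mul, integral_sub hid' (integrable_const m),
      integral_const, integral_const] at h4
    simp only [probReal_univ, measure_univ, ENNReal.toReal_one, one_smul, smul_eq_mul, one_mul, hmean] at h4
    have hmul := mul_le_mul_of_nonneg_left hmom hθ.le
    calc ∫ x, max (x - T) 0 ∂μ ≤ θ * ∫ x, |x - m| ^ p ∂μ + lam * (m - m) + c := h4
      _ = θ * ∫ x, |x - m| ^ p ∂μ + c := by rw [sub_self, mul_zero, add_zero]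
      _ ≤ θ * v ^ p + c := by linarith
  have hchain : ∫ t in Ioo α 1, q t ≤ (1 - α) * T + (θ * v ^ p + c) := by
    have := step3 ▸ step2
    linarith
  have hES : ES μ α ≤ (1 / (1 - α)) * ((1 - α) * T + (θ * v ^ p + c)) := by
    rw [ES]
    exact mul_le_mul_of_nonneg_left hchain (by positivity)
  have hfinal : (1 / (1 - α)) * ((1 - α) * T + (θ * v ^ p + c)) = m + d₂ := by
    have e : (1 - α) * T + (θ * v ^ p + c) = (1 - α) * (m + d₂) := by
      rw [hTdef]
      linear_combination hkey
    rw [e]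
    field_simp
  have : m + d₂ = m + v * α * base ^ (-(1/p)) := by
    rw [hd₂def, hk_def]; ring
  linarith [hES, hfinal ▸ hES]

end Bound

section TwoPoint

open Filter Topology

lemma integrable_dirac_aux (f : ℝ → ℝ) (a : ℝ) : Integrable f (Measure.dirac a) := by
  refine (integrable_const (f a)).congr ?_
  rw [Filter.EventuallyEq, ae_dirac_eq]
  exact Filter.eventually_pure.2 rfl

lemma isProb_twoPt {w : ℝ} (hw0 : 0 ≤ w) (hw1 : w ≤ 1) (a b : ℝ) :
    IsProbabilityMeasure
      (ENNReal.ofReal (1 - w) • Measure.dirac b + ENNReal.ofReal w • Measure.dirac a) := by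
  constructor
  rw [Measure.add_apply, Measure.smul_apply, Measure.smul_apply, measure_univ, measure_univ,
    smul_eq_mul, smul_eq_mul, mul_one, mul_one, ← ENNReal.ofReal_add (by linarith) hw0]
  norm_num

lemma integrable_twoPt {w : ℝ} (f : ℝ → ℝ) (a b : ℝ) :
    Integrable f (ENNReal.ofReal (1 - w) • Measure.dirac b + ENNReal.ofReal w • Measure.dirac a) :=
  ((integrable_dirac_aux f b).smul_measure ENNReal.ofReal_ne_top).add_measure
    ((integrable_dirac_aux f a).smul_measure ENNReal.ofReal_ne_top)

lemma integral_twoPt {w : ℝ} (hw0 : 0 ≤ w) (hw1 : w ≤ 1) (f : ℝ → ℝ) (a b : ℝ) :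
    ∫ x, f x ∂(ENNReal.ofReal (1 - w) • Measure.dirac b + ENNReal.ofReal w • Measure.dirac a)
      = (1 - w) * f b + w * f a := by
  rw [integral_add_measure ((integrable_dirac_aux f b).smul_measure ENNReal.ofReal_ne_top)
    ((integrable_dirac_aux f a).smul_measure ENNReal.ofReal_ne_top),
    integral_smul_measure, integral_smul_measure, integral_dirac, integral_dirac,
    ENNReal.toReal_ofReal (by linarith), ENNReal.toReal_ofReal hw0, smul_eq_mul, smul_eq_mul]

lemma leftQuantile_twoPt {w a b t : ℝ} (hw0 : 0 ≤ w) (hw1 : w ≤ 1) (hab : a < b)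
    (ht1 : w < t) (ht2 : t ≤ 1) :
    leftQuantile (ENNReal.ofReal (1 - w) • Measure.dirac b + ENNReal.ofReal w • Measure.dirac a) t
      = b := by
  set μ2 := ENNReal.ofReal (1 - w) • Measure.dirac b + ENNReal.ofReal w • Measure.dirac a
    with hμ2
  have happ : ∀ x : ℝ, μ2 (Iic x)
      = ENNReal.ofReal (1 - w) * (Iic x).indicator 1 b
        + ENNReal.ofReal w * (Iic x).indicator 1 a := by
    intro x
    rw [hμ2, Measure.add_apply, Measure.smul_apply, Measure.smul_apply, smul_eq_mul, smul_eq_mul,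
      Measure.dirac_apply' _ measurableSet_Iic, Measure.dirac_apply' _ measurableSet_Iic]
  have hset : {x : ℝ | t ≤ (μ2 (Iic x)).toReal} = Ici b := by
    ext x
    simp only [mem_setOf_eq, mem_Ici]
    constructor
    · intro hx
      by_contra hbx
      push_neg at hbx
      have hval : (μ2 (Iic x)).toReal ≤ w := by
        rw [happ x, indicator_of_notMem (by simpa using not_le.2 hbx)]
        by_cases hax : a ≤ x
        · rw [indicator_of_mem (by simpa using hax)]
          simp [ENNReal.toReal_ofReal hw0]
        · rw [indicator_of_notMem (by simpa using hax)]
          simp [hw0]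
      linarith
    · intro hbx
      have hax : a ≤ x := le_trans hab.le hbx
      rw [happ x, indicator_of_mem (by simpa using hbx), indicator_of_mem (by simpa using hax)]
      have : (ENNReal.ofReal (1 - w) * 1 + ENNReal.ofReal w * 1).toReal = 1 := by
        rw [mul_one, mul_one, ← ENNReal.ofReal_add (by linarith) hw0]
        norm_num
      simp only [Pi.one_apply]
      rw [this]
      exact ht2
  rw [leftQuantile, hset, csInf_Ici]

lemma moment_twoPt_eq {p v w : ℝ} (hp : 1 < p) (hv : 0 < v) (hw0 : 0 < w) (hw1 : w < 1) :
    (1 - w) * (w * (v * (w ^ p * (1 - w) + (1 - w) ^ p * w) ^ (-(1/p)))) ^ p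
      + w * ((1 - w) * (v * (w ^ p * (1 - w) + (1 - w) ^ p * w) ^ (-(1/p)))) ^ p = v ^ p := by
  have h1w : (0:ℝ) < 1 - w := by linarith
  have hp0 : (0:ℝ) < p := by linarith
  set base := w ^ p * (1 - w) + (1 - w) ^ p * w with hbase_def
  have hbase : 0 < base := by positivity
  set k := v * base ^ (-(1/p)) with hk_def
  have hk : 0 < k := mul_pos hv (Real.rpow_pos_of_pos hbase _)
  have hkp : k ^ p = v ^ p * base⁻¹ := by
    rw [hk_def, Real.mul_rpow hv.le (Real.rpow_nonneg hbase.le _), ← Real.rpow_mul hbase.le]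
    congr 1
    rw [show -(1/p) * p = -1 by field_simp, Real.rpow_neg_one]
  have e1 : (1 - w) * (w * k) ^ p + w * ((1 - w) * k) ^ p = k ^ p * base := by
    rw [Real.mul_rpow hw0.le hk.le, Real.mul_rpow h1w.le hk.le, hbase_def]
    ring
  rw [e1, hkp]
  field_simp

lemma twoPt_mem_momentSet {p m v w : ℝ} (hp : 1 < p) (hv : 0 < v) (hw0 : 0 < w) (hw1 : w < 1) :
    (ENNReal.ofReal (1 - w) •
        Measure.dirac (m + w * (v * (w ^ p * (1 - w) + (1 - w) ^ p * w) ^ (-(1/p))))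
      + ENNReal.ofReal w •
        Measure.dirac (m - (1 - w) * (v * (w ^ p * (1 - w) + (1 - w) ^ p * w) ^ (-(1/p)))))
      ∈ momentSet p m v := by
  have h1w : (0:ℝ) < 1 - w := by linarith
  have hp0 : (0:ℝ) < p := by linarith
  set base := w ^ p * (1 - w) + (1 - w) ^ p * w with hbase_def
  have hbase : 0 < base := by positivity
  set k := v * base ^ (-(1/p)) with hk_def
  have hk : 0 < k := mul_pos hv (Real.rpow_pos_of_pos hbase _)
  refine ⟨isProb_twoPt hw0.le hw1.le _ _, ?_, ?_, ?_, ?_⟩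
  · exact integrable_twoPt _ _ _
  · rw [show (∫ x, x ∂_) = ∫ x, (fun y : ℝ => y) x ∂_ from rfl,
      integral_twoPt hw0.le hw1.le (fun y : ℝ => y) _ _]
    ring
  · exact integrable_twoPt _ _ _
  · rw [integral_twoPt hw0.le hw1.le (fun x : ℝ => |x - m| ^ p) _ _]
    have e1 : |m + w * k - m| = w * k := by
      rw [show m + w * k - m = w * k by ring, abs_of_pos (mul_pos hw0 hk)]
    have e2 : |m - (1 - w) * k - m| = (1 - w) * k := by
      rw [show m - (1 - w) * k - m = -((1 - w) * k) by ring, abs_neg,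
        abs_of_pos (mul_pos h1w hk)]
    rw [e1, e2]
    exact le_of_eq (moment_twoPt_eq hp hv hw0 hw1)

end TwoPoint

section Values

open Filter Topology

lemma k_pos {p v w : ℝ} (hp : 1 < p) (hv : 0 < v) (hw0 : 0 < w) (hw1 : w < 1) :
    0 < v * (w ^ p * (1 - w) + (1 - w) ^ p * w) ^ (-(1/p)) := by
  have h1w : (0:ℝ) < 1 - w := by linarith
  have hbase : 0 < w ^ p * (1 - w) + (1 - w) ^ p * w := by positivity
  exact mul_pos hv (Real.rpow_pos_of_pos hbase _)

lemma ES_twoPt {α p m v : ℝ} (hα0 : 0 < α) (hα1 : α < 1) (hp : 1 < p) (hv : 0 < v) :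
    ES (ENNReal.ofReal (1 - α) •
          Measure.dirac (m + α * (v * (α ^ p * (1 - α) + (1 - α) ^ p * α) ^ (-(1/p))))
        + ENNReal.ofReal α •
          Measure.dirac (m - (1 - α) * (v * (α ^ p * (1 - α) + (1 - α) ^ p * α) ^ (-(1/p))))) α
      = m + v * α * (α ^ p * (1 - α) + (1 - α) ^ p * α) ^ (-(1/p)) := by
  have h1α : (0:ℝ) < 1 - α := by linarith
  set k := v * (α ^ p * (1 - α) + (1 - α) ^ p * α) ^ (-(1/p)) with hk_def
  have hk : 0 < k := k_pos hp hv hα0 hα1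
  have hab : m - (1 - α) * k < m + α * k := by nlinarith
  rw [ES]
  rw [setIntegral_congr_fun measurableSet_Ioo
    (fun t ht => leftQuantile_twoPt hα0.le hα1.le hab ht.1 ht.2.le)]
  rw [setIntegral_const, measureReal_def, Real.volume_Ioo, ENNReal.toReal_ofReal h1α.le, smul_eq_mul]
  rw [← mul_assoc, one_div, inv_mul_cancel₀ h1α.ne', one_mul, hk_def]
  ring

lemma VaR_twoPt {α p m v w : ℝ} (hw0 : 0 < w) (hwα : w < α) (hα1 : α ≤ 1)
    (hp : 1 < p) (hv : 0 < v) (hw1 : w < 1) :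
    VaR (ENNReal.ofReal (1 - w) •
          Measure.dirac (m + w * (v * (w ^ p * (1 - w) + (1 - w) ^ p * w) ^ (-(1/p))))
        + ENNReal.ofReal w •
          Measure.dirac (m - (1 - w) * (v * (w ^ p * (1 - w) + (1 - w) ^ p * w) ^ (-(1/p))))) α
      = m + w * (v * (w ^ p * (1 - w) + (1 - w) ^ p * w) ^ (-(1/p))) := by
  have hk : 0 < v * (w ^ p * (1 - w) + (1 - w) ^ p * w) ^ (-(1/p)) := k_pos hp hv hw0 hw1
  have hab : m - (1 - w) * (v * (w ^ p * (1 - w) + (1 - w) ^ p * w) ^ (-(1/p)))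
      < m + w * (v * (w ^ p * (1 - w) + (1 - w) ^ p * w) ^ (-(1/p))) := by nlinarith
  exact leftQuantile_twoPt hw0.le hw1.le hab hwα hα1

lemma p2_value {α v : ℝ} (hα0 : 0 < α) (hα1 : α < 1) (hv : 0 < v) :
    v * α * (α ^ (2:ℝ) * (1 - α) + (1 - α) ^ (2:ℝ) * α) ^ (-(1/(2:ℝ)))
      = v * Real.sqrt (α / (1 - α)) := by
  have h1α : (0:ℝ) < 1 - α := by linarith
  have hsum : α ^ (2:ℝ) * (1 - α) + (1 - α) ^ (2:ℝ) * α = α * (1 - α) := by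
    rw [Real.rpow_two, Real.rpow_two]; ring
  rw [hsum]
  have hpos : 0 < α * (1 - α) := mul_pos hα0 h1α
  rw [Real.rpow_neg hpos.le, ← Real.sqrt_eq_rpow]
  rw [Real.sqrt_div hα0.le, Real.sqrt_mul hα0.le]
  have h1 : Real.sqrt α ≠ 0 := ne_of_gt (Real.sqrt_pos.2 hα0)
  have h2 : Real.sqrt (1 - α) ≠ 0 := ne_of_gt (Real.sqrt_pos.2 h1α)
  have hsα : Real.sqrt α * Real.sqrt α = α := Real.mul_self_sqrt hα0.le
  field_simp
  linear_combination (-1 : ℝ) * (Real.sq_sqrt hα0.le)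

end Values

section Cantelli

open Filter Topology

set_option maxHeartbeats 1600000 in
lemma VaR_ne_p2 {α m v : ℝ} (hα : α ∈ Ioo (0:ℝ) 1) (hv : 0 < v)
    (μ : Measure ℝ) (hμ : μ ∈ momentSet 2 m v) :
    VaR μ α ≠ m + v * Real.sqrt (α / (1 - α)) := by
  obtain ⟨hα0, hα1⟩ := hα
  have h1α : (0:ℝ) < 1 - α := by linarith
  obtain ⟨hprob, hint_id, hmean, hint_mom, hmom⟩ := hμ
  have hid' : Integrable (fun x : ℝ => x) μ := by exact hint_id
  have hsub : Integrable (fun x : ℝ => x - m) μ := hid'.sub (integrable_const m)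
  have hmean0 : ∫ x, (x - m) ∂μ = 0 := by
    rw [integral_sub hid' (integrable_const m), integral_const]
    simp [hmean, measure_univ]
  have hmom_eq : (fun x : ℝ => |x - m| ^ (2:ℝ)) = fun x : ℝ => (x - m)^2 :=
    funext fun x => by rw [Real.rpow_two, sq_abs]
  have hint2 : Integrable (fun x : ℝ => (x - m)^2) μ := hmom_eq ▸ hint_mom
  have hmom2 : ∫ x, (x - m)^2 ∂μ ≤ v^2 := by
    rw [hmom_eq] at hmom
    rw [Real.rpow_two] at hmom
    exact hmom
  -- setup constants
  set r := Real.sqrt (α / (1 - α)) with hr_def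
  have hr : 0 < r := Real.sqrt_pos.2 (div_pos hα0 h1α)
  have hr2 : r^2 * (1 - α) = α := by
    rw [hr_def, Real.sq_sqrt (div_nonneg hα0.le h1α.le)]
    field_simp
  set K := m + v * r with hK_def
  set u := v / r with hu_def
  have hu : 0 < u := div_pos hv hr
  set C := K - m + u with hC_def
  have hC : 0 < C := by rw [hC_def, hK_def]; have := mul_pos hv hr; simp; positivity
  have hs1 : (r^2 + 1) * (1 - α) = 1 := by linear_combination hr2
  have hv_eq : v = u * r := by rw [hu_def]; field_simp
  have hnum : C^2 * (1 - α) = v^2 + u^2 := by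
    rw [hC_def, hK_def, hv_eq]
    linear_combination (u^2 * (r^2 + 1)) * hs1
  intro hVaR
  -- F x < α for x < K
  have hFlt : ∀ x, x < K → (μ (Iic x)).toReal < α := by
    intro x hx
    by_contra hge
    push_neg at hge
    have hxmem : x ∈ {y : ℝ | α ≤ cdfR μ y} := hge
    have := csInf_le (bddBelow_quantSet μ hα0) hxmem
    rw [← leftQuantile_eq_csInf] at this
    have : K ≤ x := le_trans (le_of_eq hVaR.symm) this
    linarith
  -- μ (Iio K) ≤ ofReal α
  have hIio : μ (Iio K) ≤ ENNReal.ofReal α := by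
    have hU : Iio K = ⋃ n : ℕ, Iic (K - 1/(n+1)) := by
      ext z
      simp only [mem_Iio, mem_iUnion, mem_Iic]
      constructor
      · intro hz
        obtain ⟨n, hn⟩ := exists_nat_one_div_lt (by linarith : 0 < K - z)
        exact ⟨n, by push_cast at hn ⊢; linarith⟩
      · rintro ⟨n, hn⟩
        have : (0:ℝ) < 1/(n+1) := by positivity
        linarith
    rw [hU]
    have hmono : Monotone (fun n : ℕ => Iic (K - 1/(n+1))) := by
      intro i j hij
      have hle : (1:ℝ)/(j+1) ≤ 1/(i+1) :=
        one_div_le_one_div_of_le (by positivity)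
          (by exact_mod_cast Nat.add_le_add_right hij 1)
      exact Iic_subset_Iic.2 (by linarith)
    have htend := tendsto_measure_iUnion_atTop (μ := μ) hmono
    refine le_of_tendsto htend (Eventually.of_forall fun n => ?_)
    have hlt : K - 1/(n+1) < K := by
      have : (0:ℝ) < 1/(n+1) := by positivity
      linarith
    have := hFlt _ hlt
    calc μ (Iic (K - 1/(n+1)))
        = ENNReal.ofReal ((μ (Iic (K - 1/(n+1)))).toReal) :=
          (ENNReal.ofReal_toReal (measure_ne_top μ _)).symm
      _ ≤ ENNReal.ofReal α := ENNReal.ofReal_le_ofReal this.le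
  -- real versions
  set tIo := (μ (Iio K)).toReal with htIo_def
  set a := (μ (Ici K)).toReal with ha_def
  have hsum1 : tIo + a = 1 := by
    rw [htIo_def, ha_def, ← ENNReal.toReal_add (measure_ne_top μ _) (measure_ne_top μ _),
      ← measure_union (Iio_disjoint_Ici le_rfl) measurableSet_Ici, Iio_union_Ici, measure_univ,
      ENNReal.toReal_one]
  have htIo_le : tIo ≤ α := by
    have := ENNReal.toReal_mono ENNReal.ofReal_ne_top hIio
    rwa [ENNReal.toReal_ofReal hα0.le] at this
  have ha_ge : 1 - α ≤ a := by linarith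
  -- Cantelli pointwise
  have hind : ∀ y : ℝ, (Ici K).indicator (fun _ : ℝ => C^2) y ≤ (y - m + u)^2 := by
    intro y
    by_cases hy : y ∈ Ici K
    · rw [indicator_of_mem hy]
      have hKy : K ≤ y := hy
      have h1 : C ≤ y - m + u := by rw [hC_def]; linarith
      exact pow_le_pow_left₀ hC.le h1 2
    · rw [indicator_of_notMem hy]
      positivity
  have hexp : (fun y : ℝ => (y - m + u)^2)
      = fun y : ℝ => ((y - m)^2 + (2*u)*(y - m)) + u^2 := funext fun y => by ring
  have hint_sq : Integrable (fun y : ℝ => (y - m + u)^2) μ := by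
    rw [hexp]
    exact (hint2.add (hsub.const_mul (2*u))).add (integrable_const _)
  have hint_ind : Integrable ((Ici K).indicator (fun _ : ℝ => C^2)) μ :=
    (integrable_const _).indicator measurableSet_Ici
  have hInt1 : ∫ y, (Ici K).indicator (fun _ : ℝ => C^2) y ∂μ = C^2 * a := by
    rw [integral_indicator measurableSet_Ici, setIntegral_const, measureReal_def, smul_eq_mul, ha_def, mul_comm]
  have hi2 : Integrable (fun y : ℝ => 2 * u * (y - m)) μ := hsub.const_mul (2*u)
  have hi1 : Integrable (fun y : ℝ => (y - m)^2 + 2 * u * (y - m)) μ := hint2.add hi2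
  have hInt2 : ∫ y, (y - m + u)^2 ∂μ = (∫ y, (y - m)^2 ∂μ) + u^2 := by
    rw [hexp, integral_add hi1 (integrable_const _),
      integral_add hint2 hi2, integral_const_mul, hmean0, integral_const]
    simp [measure_univ]
  have hle1 : C^2 * a ≤ (∫ y, (y - m)^2 ∂μ) + u^2 := by
    have h := integral_mono hint_ind hint_sq hind
    rwa [hInt1, hInt2] at h
  set M := ∫ y, (y - m)^2 ∂μ with hM_def
  have hC2 : 0 < C^2 := by positivity
  have hchain1 : C^2 * (1 - α) ≤ C^2 * a := by nlinarith
  have hchain2 : M + u^2 ≤ v^2 + u^2 := by linarith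
  -- all equalities
  have hMv : M = v^2 := by nlinarith
  have haeq : C^2 * a = M + u^2 := by nlinarith
  -- a.e. equality
  have hzero : ∫ y, ((y - m + u)^2 - (Ici K).indicator (fun _ : ℝ => C^2) y) ∂μ = 0 := by
    rw [integral_sub hint_sq hint_ind, hInt1, hInt2]
    linarith
  have hdiff : Integrable
      (fun y : ℝ => (y - m + u)^2 - (Ici K).indicator (fun _ : ℝ => C^2) y) μ :=
    hint_sq.sub hint_ind
  have hae := (integral_eq_zero_iff_of_nonneg
    (Pi.le_def.2 fun y => by simpa using sub_nonneg.2 (hind y)) hdiff).1 hzero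
  have hsupp : ∀ᵐ y ∂μ, y = K ∨ y = m - u := by
    filter_upwards [hae] with y hy
    have hy' : (y - m + u)^2 - (Ici K).indicator (fun _ : ℝ => C^2) y = 0 := by
      simpa using hy
    by_cases hyK : y ∈ Ici K
    · left
      rw [indicator_of_mem hyK] at hy'
      have hKy : K ≤ y := hyK
      have hfac : (y - m + u - C) * (y - m + u + C) = 0 := by nlinarith
      rcases mul_eq_zero.1 hfac with h | h
      · rw [hC_def] at h; linarith
      · have : C ≤ y - m + u := by rw [hC_def]; linarith
        linarith
    · right
      rw [indicator_of_notMem hyK] at hy'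
      have h0 : (y - m + u)^2 = 0 := by linarith
      have := pow_eq_zero_iff (n := 2) (by norm_num) |>.1 h0
      linarith
  have hmuK : m - u < K := by rw [hK_def]; have := mul_pos hv hr; linarith
  have hsle : (Ioi (m - u) : Set ℝ) ≤ᵐ[μ] (Ici K : Set ℝ) := by
    filter_upwards [hsupp] with y hy hmem
    have hmy : m - u < y := hmem
    rcases hy with h | h
    · exact h.ge
    · exfalso
      rw [h] at hmy
      exact lt_irrefl _ hmy
  have hIoi_le : (μ (Ioi (m - u))).toReal ≤ a := by
    rw [ha_def]
    exact ENNReal.toReal_mono (measure_ne_top μ _) (measure_mono_ae hsle)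
  have hsum2 : (μ (Iic (m - u))).toReal + (μ (Ioi (m - u))).toReal = 1 := by
    rw [← ENNReal.toReal_add (measure_ne_top μ _) (measure_ne_top μ _),
      ← measure_union (Iic_disjoint_Ioi le_rfl) measurableSet_Ioi, Iic_union_Ioi, measure_univ,
      ENNReal.toReal_one]
  have ha_le : a ≤ 1 - α := by nlinarith
  have hIic_ge : α ≤ (μ (Iic (m - u))).toReal := by linarith
  have hmem : (m - u) ∈ {y : ℝ | α ≤ cdfR μ y} := hIic_ge
  have hq_le := csInf_le (bddBelow_quantSet μ hα0) hmem
  rw [← leftQuantile_eq_csInf] at hq_le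
  have : K ≤ m - u := le_trans (le_of_eq hVaR.symm) hq_le
  linarith

end Cantelli


open Filter Topology in
set_option maxHeartbeats 1000000 in
/-- worst-case VaR and ES over `M^p(m,v)`. The common value is
`m + v·α·(α^p(1−α)+(1−α)^p α)^{−1/p}`; the ES maximum is attained by an explicit
two-point distribution, the value reduces to `m + v·√(α/(1−α))` for `p = 2`, and for
`p = 2` the VaR supremum is not attained. -/
theorem sup_VaR_eq_sup_ES_momentSet (α p m v : ℝ)
    (hα : α ∈ Ioo (0:ℝ) 1) (hp : 1 < p) (hv : 0 < v) :
    sSup ((fun μ => VaR μ α) '' momentSet p m v)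
        = m + v * α * (α ^ p * (1 - α) + (1 - α) ^ p * α) ^ (-(1 / p)) ∧
    sSup ((fun μ => ES μ α) '' momentSet p m v)
        = m + v * α * (α ^ p * (1 - α) + (1 - α) ^ p * α) ^ (-(1 / p)) ∧
    (∃ μ ∈ momentSet p m v,
      ES μ α = m + v * α * (α ^ p * (1 - α) + (1 - α) ^ p * α) ^ (-(1 / p)) ∧
      μ = ENNReal.ofReal (1 - α) •
            Measure.dirac (m + α * (v * (α ^ p * (1 - α) + (1 - α) ^ p * α) ^ (-(1 / p))))
        + ENNReal.ofReal α •
            Measure.dirac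
              (m - (1 - α) * (v * (α ^ p * (1 - α) + (1 - α) ^ p * α) ^ (-(1 / p))))) ∧
    (p = 2 →
      m + v * α * (α ^ p * (1 - α) + (1 - α) ^ p * α) ^ (-(1 / p))
          = m + v * Real.sqrt (α / (1 - α)) ∧
      ∀ μ ∈ momentSet p m v,
        VaR μ α ≠ m + v * α * (α ^ p * (1 - α) + (1 - α) ^ p * α) ^ (-(1 / p))) := by

  obtain ⟨hα0, hα1⟩ := hα
  have h1α : (0:ℝ) < 1 - α := by linarith
  have hμstar_mem := twoPt_mem_momentSet (p := p) (m := m) (v := v) hp hv hα0 hα1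
  have hES_star := ES_twoPt (p := p) (m := m) (v := v) hα0 hα1 hp hv
  have hub_ES : ∀ y ∈ (fun μ => ES μ α) '' momentSet p m v,
      y ≤ m + v * α * (α ^ p * (1 - α) + (1 - α) ^ p * α) ^ (-(1 / p)) := by
    rintro y ⟨μ, hμ, rfl⟩
    exact ES_le_K α p m v ⟨hα0, hα1⟩ hp hv μ hμ
  have hub_VaR : ∀ y ∈ (fun μ => VaR μ α) '' momentSet p m v,
      y ≤ m + v * α * (α ^ p * (1 - α) + (1 - α) ^ p * α) ^ (-(1 / p)) := by
    rintro y ⟨μ, hμ, rfl⟩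
    haveI := hμ.1
    exact le_trans (VaR_le_ES μ ⟨hα0, hα1⟩ hμ.2.1) (ES_le_K α p m v ⟨hα0, hα1⟩ hp hv μ hμ)
  have hbddV : BddAbove ((fun μ => VaR μ α) '' momentSet p m v) := ⟨_, hub_VaR⟩
  have hneV : ((fun μ => VaR μ α) '' momentSet p m v).Nonempty :=
    ⟨_, ⟨_, hμstar_mem, rfl⟩⟩
  refine ⟨?_, ?_, ?_, ?_⟩
  · -- VaR sup
    refine le_antisymm (csSup_le hneV hub_VaR) ?_
    have hbase : (0:ℝ) < α ^ p * (1 - α) + (1 - α) ^ p * α := by positivity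
    have h1 : ContinuousAt (fun w : ℝ => w ^ p) α :=
      Real.continuousAt_rpow_const α p (Or.inl hα0.ne')
    have h2 : ContinuousAt (fun w : ℝ => (1 - w) ^ p) α := by
      have hg : ContinuousAt (fun y : ℝ => y ^ p) (1 - α) :=
        Real.continuousAt_rpow_const (1 - α) p (Or.inl h1α.ne')
      have hf : ContinuousAt (fun w : ℝ => 1 - w) α :=
        (continuous_const.sub continuous_id).continuousAt
      exact hg.comp hf
    have hb : ContinuousAt (fun w : ℝ => w ^ p * (1 - w) + (1 - w) ^ p * w) α :=
      (h1.mul ((continuous_const.sub continuous_id).continuousAt)).add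
        (h2.mul continuous_id.continuousAt)
    have h3 : ContinuousAt (fun y : ℝ => y ^ (-(1/p)))
        ((fun w : ℝ => w ^ p * (1 - w) + (1 - w) ^ p * w) α) :=
      Real.continuousAt_rpow_const _ _ (Or.inl hbase.ne')
    have hcomp : ContinuousAt
        (fun w : ℝ => (w ^ p * (1 - w) + (1 - w) ^ p * w) ^ (-(1/p))) α := by
      exact ContinuousAt.comp (f := fun w : ℝ => w ^ p * (1 - w) + (1 - w) ^ p * w) (x := α) h3 hb
    have hcont : ContinuousAt
        (fun w : ℝ => m + w * (v * (w ^ p * (1 - w) + (1 - w) ^ p * w) ^ (-(1/p)))) α :=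
      continuousAt_const.add (continuousAt_id.mul (continuousAt_const.mul hcomp))
    have hfK : m + α * (v * (α ^ p * (1 - α) + (1 - α) ^ p * α) ^ (-(1/p)))
        = m + v * α * (α ^ p * (1 - α) + (1 - α) ^ p * α) ^ (-(1 / p)) := by ring
    have htend : Tendsto
        (fun w : ℝ => m + w * (v * (w ^ p * (1 - w) + (1 - w) ^ p * w) ^ (-(1/p))))
        (𝓝[<] α)
        (𝓝 (m + v * α * (α ^ p * (1 - α) + (1 - α) ^ p * α) ^ (-(1 / p)))) := by
      rw [← hfK]
      exact hcont.tendsto.mono_left nhdsWithin_le_nhds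
    refine le_of_tendsto htend ?_
    filter_upwards [Ioo_mem_nhdsLT_of_mem (⟨hα0, le_rfl⟩ : α ∈ Ioc (0:ℝ) α)] with w hw
    have hw0 : 0 < w := hw.1
    have hwα : w < α := hw.2
    have hw1 : w < 1 := lt_trans hwα hα1
    have hmemw := twoPt_mem_momentSet (p := p) (m := m) (v := v) hp hv hw0 hw1
    have hVaRw := VaR_twoPt (α := α) (p := p) (m := m) (v := v) hw0 hwα hα1.le hp hv hw1
    exact le_csSup hbddV ⟨_, hmemw, hVaRw⟩
  · -- ES sup
    exact IsGreatest.csSup_eq ⟨⟨_, hμstar_mem, hES_star⟩, hub_ES⟩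
  · -- attainment
    exact ⟨_, hμstar_mem, hES_star, rfl⟩
  · -- p = 2
    intro hp2
    subst hp2
    have hval : m + v * α * (α ^ (2:ℝ) * (1 - α) + (1 - α) ^ (2:ℝ) * α) ^ (-(1/(2:ℝ)))
        = m + v * Real.sqrt (α / (1 - α)) := by
      rw [p2_value hα0 hα1 hv]
    refine ⟨hval, fun μ hμ => ?_⟩
    rw [hval]
    exact VaR_ne_p2 ⟨hα0, hα1⟩ hv μ hμ
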